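/- Let n ∈ ℕ, A ∈ Mₙ(ℝ) and α̂ ∈ (0,1]ⁿ, and suppose σ_{α̂}(A) ⊆ ℂ₋. Then δ²_{α̂}(A) ≥ sup{ ε > 0 : σ²_{α̂,ε}(A) ⊆ ℂ₋ }. -/

import Mathlib

/-- The matrix `diag(z^{α₁},…,z^{αₙ}) - M`, with complex powers in the principal branch
(`Complex.cpow`, whose argument lies in `(-π, π]`). -/
noncomputable def fracMat {n : ℕ} (α : Fin n → ℝ) (M : Matrix (Fin n) (Fin n) ℂ) (z : ℂ) :
    Matrix (Fin n) (Fin n) ℂ :=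
  Matrix.diagonal (fun i => z ^ (α i : ℂ)) - M

/-- The `α`-order spectrum of a (complex) matrix `M`. -/
noncomputable def fracSpec {n : ℕ} (α : Fin n → ℝ) (M : Matrix (Fin n) (Fin n) ℂ) : Set ℂ :=
  {z : ℂ | (fracMat α M z).det = 0}

/-- Matrix operator norm induced by a vector norm `N`. -/
noncomputable def matOpNorm {n : ℕ} (N : (Fin n → ℂ) → ℝ) (M : Matrix (Fin n) (Fin n) ℂ) : ℝ :=
  sSup {t : ℝ | ∃ v : Fin n → ℂ, N v = 1 ∧ t = N (M.mulVec v)}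

/-- `‖M⁻¹‖⁻¹` with the convention that it equals `0` iff `det M = 0`. -/
noncomputable def resInvNorm {n : ℕ} (N : (Fin n → ℂ) → ℝ) (M : Matrix (Fin n) (Fin n) ℂ) : ℝ :=
  if M.det = 0 then 0 else (matOpNorm N M⁻¹)⁻¹

/-- The `α`-order `ε`-pseudospectrum w.r.t. the vector norm `N`. -/
noncomputable def pseudoSpec {n : ℕ} (N : (Fin n → ℂ) → ℝ) (α : Fin n → ℝ) (ε : ℝ)
    (M : Matrix (Fin n) (Fin n) ℂ) : Set ℂ :=
  {z : ℂ | resInvNorm N (fracMat α M z) ≤ ε}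

/-- The Euclidean norm on `Fin n → ℂ`. -/
noncomputable def eucNorm {n : ℕ} (v : Fin n → ℂ) : ℝ :=
  Real.sqrt (∑ i, ‖v i‖ ^ 2)

/-- The matrix norm `‖·‖₂` induced by the Euclidean norm. -/
noncomputable def l2OpNorm {n : ℕ} (M : Matrix (Fin n) (Fin n) ℂ) : ℝ :=
  matOpNorm eucNorm M

/-- The `α`-order `ε`-pseudospectrum `σ²_{α,ε}` w.r.t. the Euclidean norm. -/
noncomputable def pseudoSpec2 {n : ℕ} (α : Fin n → ℝ) (ε : ℝ)
    (M : Matrix (Fin n) (Fin n) ℂ) : Set ℂ :=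
  pseudoSpec eucNorm α ε M

/-- `δ²_{α}(A) := inf{‖E‖₂ : E ∈ Mₙ(ℂ), σ_α(A+E) ∩ ℂ_{≥0} ≠ ∅}`. -/
noncomputable def delta2 {n : ℕ} (α : Fin n → ℝ) (A : Matrix (Fin n) (Fin n) ℝ) : ℝ :=
  sInf {r : ℝ | ∃ E : Matrix (Fin n) (Fin n) ℂ, l2OpNorm E = r ∧
    ∃ z ∈ fracSpec α (A.map (fun a => (a : ℂ)) + E), 0 ≤ z.re}

/-- `β̂` is an `ε`-rational approximation of `α̂` associated with `A` (Definition 4.1):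
(i) each `β_i` is rational with `0 < β_i ≤ α_i ≤ 1`;
(ii) some `R ≥ 1` excludes both Euclidean `ε`-pseudospectra from `{|z| > R}`;
(iii) some `ρ ∈ (0,1)` excludes both spectra from `{|z| < ρ}`;
(iv) for these `R, ρ`: `sup_{ρ ≤ |z| ≤ R} |z^{α_i} − z^{β_i}| < ε` for all `i`. -/
def IsRatApprox {n : ℕ} (A : Matrix (Fin n) (Fin n) ℝ) (α : Fin n → ℝ) (ε : ℝ)
    (β : Fin n → ℝ) : Prop :=
  (∀ i, ∃ r : ℚ, (r : ℝ) = β i) ∧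
  (∀ i, 0 < β i ∧ β i ≤ α i ∧ α i ≤ 1) ∧
  ∃ R : ℝ, 1 ≤ R ∧ ∃ ρ : ℝ, ρ ∈ Set.Ioo (0 : ℝ) 1 ∧
    pseudoSpec2 α ε (A.map (fun a => (a : ℂ))) ∩ {z : ℂ | R < ‖z‖} = ∅ ∧
    pseudoSpec2 β ε (A.map (fun a => (a : ℂ))) ∩ {z : ℂ | R < ‖z‖} = ∅ ∧
    fracSpec α (A.map (fun a => (a : ℂ))) ∩ {z : ℂ | ‖z‖ < ρ} = ∅ ∧
    fracSpec β (A.map (fun a => (a : ℂ))) ∩ {z : ℂ | ‖z‖ < ρ} = ∅ ∧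
    ∀ i, sSup {t : ℝ | ∃ z : ℂ, ρ ≤ ‖z‖ ∧ ‖z‖ ≤ R ∧
      t = ‖z ^ (α i : ℂ) - z ^ (β i : ℂ)‖} < ε


/-! ### Auxiliary lemmas -/

lemma eucNorm_eq' {n : ℕ} (v : Fin n → ℂ) :
    eucNorm v = ‖(WithLp.equiv 2 (Fin n → ℂ)).symm v‖ := by
  simp [eucNorm, EuclideanSpace.norm_eq]

noncomputable def opB {n : ℕ} (M : Matrix (Fin n) (Fin n) ℂ) : ℝ :=
  ‖(LinearMap.toContinuousLinearMap (Matrix.toEuclideanLin M))‖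

set_option synthInstance.maxHeartbeats 1000000 in
lemma mulVec_opB_bound {n : ℕ} (M : Matrix (Fin n) (Fin n) ℂ) (v : Fin n → ℂ) :
    eucNorm (M.mulVec v) ≤ opB M * eucNorm v := by
  rw [eucNorm_eq', eucNorm_eq']
  have h := (LinearMap.toContinuousLinearMap (Matrix.toEuclideanLin M)).le_opNorm
      ((WithLp.equiv 2 (Fin n → ℂ)).symm v)
  simpa [Matrix.toEuclideanLin_apply, opB] using h

lemma eucNorm_nonneg {n : ℕ} (v : Fin n → ℂ) : 0 ≤ eucNorm v := Real.sqrt_nonneg _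

lemma eucNorm_eq_zero_iff {n : ℕ} (v : Fin n → ℂ) : eucNorm v = 0 ↔ v = 0 := by
  rw [eucNorm_eq', norm_eq_zero]
  constructor
  · intro h
    have := congrArg (WithLp.equiv 2 (Fin n → ℂ)) h
    simpa using this
  · rintro rfl
    rfl

lemma eucNorm_smul {n : ℕ} (a : ℂ) (v : Fin n → ℂ) :
    eucNorm (a • v) = ‖a‖ * eucNorm v := by
  rw [eucNorm_eq', eucNorm_eq']
  exact norm_smul a ((WithLp.equiv 2 (Fin n → ℂ)).symm v)

lemma matOpNorm_eucNorm_nonneg {n : ℕ} (M : Matrix (Fin n) (Fin n) ℂ) :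
    0 ≤ matOpNorm eucNorm M := by
  apply Real.sSup_nonneg
  rintro t ⟨v, -, rfl⟩
  exact eucNorm_nonneg _

lemma eucNorm_mulVec_le {n : ℕ} (M : Matrix (Fin n) (Fin n) ℂ) (w : Fin n → ℂ) :
    eucNorm (M.mulVec w) ≤ matOpNorm eucNorm M * eucNorm w := by
  by_cases hw : w = 0
  · subst hw
    rw [Matrix.mulVec_zero, (eucNorm_eq_zero_iff (0 : Fin n → ℂ)).mpr rfl, mul_zero]
  · have hc : 0 < eucNorm w :=
      (eucNorm_nonneg w).lt_of_ne fun h' => hw ((eucNorm_eq_zero_iff w).mp h'.symm)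
    set c := eucNorm w with hcdef
    set u : Fin n → ℂ := ((c : ℂ))⁻¹ • w with hu
    have hunorm : eucNorm u = 1 := by
      rw [hu, eucNorm_smul, norm_inv, Complex.norm_real, Real.norm_eq_abs, abs_of_pos hc, ← hcdef]
      field_simp
    have hle : eucNorm (M.mulVec u) ≤ matOpNorm eucNorm M := by
      apply le_csSup
      · refine ⟨opB M, ?_⟩
        rintro t ⟨v, hv, rfl⟩
        simpa [hv] using mulVec_opB_bound M v
      · exact ⟨u, hunorm, rfl⟩
    have hwu : w = (c : ℂ) • u := by
      rw [hu, smul_smul, mul_inv_cancel₀ (Complex.ofReal_ne_zero.mpr hc.ne'), one_smul]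
    calc eucNorm (M.mulVec w) = eucNorm (M.mulVec ((c : ℂ) • u)) := by rw [← hwu]
      _ = ‖(c : ℂ)‖ * eucNorm (M.mulVec u) := by
          rw [Matrix.mulVec_smul, eucNorm_smul]
      _ = c * eucNorm (M.mulVec u) := by rw [Complex.norm_real, Real.norm_eq_abs, abs_of_pos hc]
      _ ≤ c * matOpNorm eucNorm M := mul_le_mul_of_nonneg_left hle hc.le
      _ = matOpNorm eucNorm M * c := mul_comm _ _

lemma resInvNorm_le_of_perturb {n : ℕ} (M E : Matrix (Fin n) (Fin n) ℂ)
    (h : (M - E).det = 0) : resInvNorm eucNorm M ≤ matOpNorm eucNorm E := by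
  unfold resInvNorm
  split_ifs with hM
  · exact matOpNorm_eucNorm_nonneg E
  · obtain ⟨v, hv0, hv⟩ := Matrix.exists_mulVec_eq_zero_iff.mpr h
    have hME : M.mulVec v = E.mulVec v := by
      have h2 : M.mulVec v - E.mulVec v = 0 := by rw [← Matrix.sub_mulVec]; exact hv
      exact sub_eq_zero.mp h2
    have hrec : M⁻¹.mulVec (M.mulVec v) = v := by
      rw [Matrix.mulVec_mulVec, Matrix.nonsing_inv_mul M (isUnit_iff_ne_zero.mpr hM), Matrix.one_mulVec]
    have hc : 0 < eucNorm v :=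
      (eucNorm_nonneg v).lt_of_ne fun h' => hv0 ((eucNorm_eq_zero_iff v).mp h'.symm)
    have chain : eucNorm v ≤
        matOpNorm eucNorm M⁻¹ * matOpNorm eucNorm E * eucNorm v := by
      calc eucNorm v = eucNorm (M⁻¹.mulVec (E.mulVec v)) := by rw [← hME, hrec]
        _ ≤ matOpNorm eucNorm M⁻¹ * eucNorm (E.mulVec v) := eucNorm_mulVec_le _ _
        _ ≤ matOpNorm eucNorm M⁻¹ * (matOpNorm eucNorm E * eucNorm v) :=
            mul_le_mul_of_nonneg_left (eucNorm_mulVec_le _ _) (matOpNorm_eucNorm_nonneg _)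
        _ = matOpNorm eucNorm M⁻¹ * matOpNorm eucNorm E * eucNorm v := by ring
    have h1 : 1 ≤ matOpNorm eucNorm M⁻¹ * matOpNorm eucNorm E := by
      have h2 : 1 * eucNorm v ≤ matOpNorm eucNorm M⁻¹ * matOpNorm eucNorm E * eucNorm v := by
        rwa [one_mul]
      exact le_of_mul_le_mul_right h2 hc
    have ha : 0 < matOpNorm eucNorm M⁻¹ := by
      rcases (matOpNorm_eucNorm_nonneg M⁻¹).lt_or_eq with h' | h'
      · exact h'
      · exfalso; rw [← h', zero_mul] at h1; linarith
    calc (matOpNorm eucNorm M⁻¹)⁻¹ = (matOpNorm eucNorm M⁻¹)⁻¹ * 1 := (mul_one _).symm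
      _ ≤ (matOpNorm eucNorm M⁻¹)⁻¹ *
          (matOpNorm eucNorm M⁻¹ * matOpNorm eucNorm E) :=
          mul_le_mul_of_nonneg_left h1 (inv_nonneg.mpr ha.le)
      _ = matOpNorm eucNorm E := inv_mul_cancel_left₀ ha.ne' _

/-- Remark 4.3: if `σ_{α̂}(A) ⊆ ℂ₋` then
`δ²_{α̂}(A) ≥ sup{ε > 0 : σ²_{α̂,ε}(A) ⊆ ℂ₋}`. -/
theorem delta2_ge_sSup_pseudospectrum_eps
    {n : ℕ} (A : Matrix (Fin n) (Fin n) ℝ) (α : Fin n → ℝ)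
    (hα : ∀ i, α i ∈ Set.Ioc (0 : ℝ) 1)
    (hspec : fracSpec α (A.map (fun a => (a : ℂ))) ⊆ {z : ℂ | z.re < 0}) :
    sSup {ε : ℝ | 0 < ε ∧
        pseudoSpec2 α ε (A.map (fun a => (a : ℂ))) ⊆ {z : ℂ | z.re < 0}} ≤
      delta2 α A := by
  have hdelta_nonneg : 0 ≤ delta2 α A := by
    apply Real.sInf_nonneg
    rintro r ⟨E, hE, -⟩
    rw [← hE]
    exact matOpNorm_eucNorm_nonneg E
  apply Real.sSup_le _ hdelta_nonneg
  rintro ε ⟨hε, hsub⟩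
  rcases Nat.eq_zero_or_pos n with hn | hn
  · exfalso
    subst hn
    have h1 : (1 : ℂ) ∈ pseudoSpec2 α ε (A.map (fun a => (a : ℂ))) := by
      simp only [pseudoSpec2, pseudoSpec, Set.mem_setOf_eq]
      have hdet : (fracMat α (A.map (fun a => (a : ℂ))) 1).det = 1 := Matrix.det_fin_zero
      unfold resInvNorm
      rw [if_neg (by rw [hdet]; exact one_ne_zero)]
      have hS : {t : ℝ | ∃ v : Fin 0 → ℂ, eucNorm v = 1 ∧
          t = eucNorm ((fracMat α (A.map (fun a => (a : ℂ))) 1)⁻¹.mulVec v)} = ∅ := by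
        ext t
        simp only [Set.mem_setOf_eq, Set.mem_empty_iff_false, iff_false, not_exists]
        intro v hv
        have h0 : eucNorm v = 0 := by simp [eucNorm]
        rw [h0] at hv
        norm_num at hv
      unfold matOpNorm
      rw [hS, Real.sSup_empty, inv_zero]
      exact hε.le
    have := hsub h1
    simp only [Set.mem_setOf_eq, Complex.one_re] at this
    linarith
  · apply le_csInf
    · haveI : Nonempty (Fin n) := Fin.pos_iff_nonempty.mp hn
      refine ⟨l2OpNorm (1 - A.map (fun a => (a : ℂ))),
        1 - A.map (fun a => (a : ℂ)), rfl, 1, ?_, by norm_num⟩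
      show (fracMat α (A.map (fun a => (a : ℂ)) + (1 - A.map (fun a => (a : ℂ)))) 1).det = 0
      have hz : fracMat α (A.map (fun a => (a : ℂ)) + (1 - A.map (fun a => (a : ℂ)))) 1 = 0 := by
        unfold fracMat
        have h1 : (fun i => (1 : ℂ) ^ (α i : ℂ)) = fun _ => 1 := by
          funext i; exact Complex.one_cpow _
        rw [h1, Matrix.diagonal_one]
        abel
      rw [hz]
      exact Matrix.det_zero
    · rintro r ⟨E, hE, z, hz, hzre⟩
      by_contra hlt
      push_neg at hlt
      have hmat : fracMat α (A.map (fun a => (a : ℂ)) + E) z =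
          fracMat α (A.map (fun a => (a : ℂ))) z - E := by
        unfold fracMat
        abel
      have hdet : (fracMat α (A.map (fun a => (a : ℂ))) z - E).det = 0 := by
        rw [← hmat]; exact hz
      have hres := resInvNorm_le_of_perturb _ E hdet
      have hzin : z ∈ pseudoSpec2 α ε (A.map (fun a => (a : ℂ))) := by
        simp only [pseudoSpec2, pseudoSpec, Set.mem_setOf_eq]
        calc resInvNorm eucNorm (fracMat α (A.map (fun a => (a : ℂ))) z)
            ≤ matOpNorm eucNorm E := hres
          _ = r := hE
          _ ≤ ε := hlt.le
      have := hsub hzin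
      simp only [Set.mem_setOf_eq] at this
      linarith
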